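/- Let Λ > 0 and C > 0 be real constants, and let E : [T₀, ∞) → ℝ be a differentiable nonnegative function satisfying E'(T) ≤ -2Λ·E(T) + 2C·E(T)^{3/2} for all T ≥ T₀, with 0 < E(T₀) < Λ²/C². Then E(T) → 0 as T → ∞. -/

import Mathlib

theorem energy_decays_to_zero (Λ C T₀ : ℝ) (hΛ : 0 < Λ) (hC : 0 < C) (E : ℝ → ℝ)
    (hdiff : ∀ T ≥ T₀, DifferentiableAt ℝ E T)
    (hnonneg : ∀ T ≥ T₀, 0 ≤ E T)
    (hineq : ∀ T ≥ T₀, deriv E T ≤ -2 * Λ * E T + 2 * C * (E T) ^ ((3 : ℝ) / 2))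
    (hpos : 0 < E T₀) (hsmall : E T₀ < Λ ^ 2 / C ^ 2) :
    Filter.Tendsto E Filter.atTop (nhds 0) := by
  set b' : ℝ := (E T₀ + Λ ^ 2 / C ^ 2) / 2 with hb'def
  have hb'pos : 0 < b' := by positivity
  have hb'lt : b' < Λ ^ 2 / C ^ 2 := by
    rw [hb'def]; linarith
  have hb'gt : E T₀ < b' := by rw [hb'def]; linarith
  have hsq : C * Real.sqrt b' < Λ := by
    have h1 : Real.sqrt b' < Λ / C := by
      rw [Real.sqrt_lt' (by positivity)]
      rwa [div_pow]
    calc C * Real.sqrt b' < C * (Λ / C) := by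
          exact mul_lt_mul_of_pos_left h1 hC
      _ = Λ := by field_simp
  -- rpow fact
  have hrpow : ∀ x : ℝ, 0 ≤ x → x ^ ((3 : ℝ) / 2) = x * Real.sqrt x := by
    intro x hx
    rw [Real.sqrt_eq_rpow]
    rw [show (3 : ℝ) / 2 = 1 + 1 / 2 by norm_num, Real.rpow_add' hx (by norm_num),
      Real.rpow_one]
  -- invariance: E stays below b'
  have hinv : ∀ T ≥ T₀, E T ≤ b' := by
    intro T hT
    have := image_le_of_deriv_right_lt_deriv_boundary (f := E) (f' := deriv E)
      (a := T₀) (b := T) (B := fun _ => b') (B' := fun _ => 0)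
      (fun x hx => ((hdiff x hx.1).continuousAt).continuousWithinAt)
      (fun x hx => ((hdiff x hx.1).hasDerivAt).hasDerivWithinAt)
      hb'gt.le (fun x => hasDerivAt_const x b') ?_ (Set.right_mem_Icc.2 hT)
    · exact this
    · intro x hx hEx
      have hx0 := hx.1
      have h := hineq x hx0
      rw [hEx, hrpow b' hb'pos.le] at h
      calc deriv E x ≤ -2 * Λ * b' + 2 * C * (b' * Real.sqrt b') := h
        _ = 2 * b' * (C * Real.sqrt b' - Λ) := by ring
        _ < 0 := by
            apply mul_neg_of_pos_of_neg (by positivity)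
            linarith
  set μ : ℝ := Λ - C * Real.sqrt b' with hμdef
  have hμ : 0 < μ := by rw [hμdef]; linarith
  -- derivative bound
  have hderiv : ∀ x ≥ T₀, deriv E x ≤ -(2 * μ) * E x := by
    intro x hx
    have hE0 := hnonneg x hx
    have h := hineq x hx
    rw [hrpow _ hE0] at h
    have hsle : Real.sqrt (E x) ≤ Real.sqrt b' := Real.sqrt_le_sqrt (hinv x hx)
    calc deriv E x ≤ -2 * Λ * E x + 2 * C * (E x * Real.sqrt (E x)) := h
      _ ≤ -2 * Λ * E x + 2 * C * (E x * Real.sqrt b') := by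
          apply add_le_add_right
          apply mul_le_mul_of_nonneg_left _ (by positivity)
          exact mul_le_mul_of_nonneg_left hsle hE0
      _ = -(2 * μ) * E x := by rw [hμdef]; ring
  -- g is antitone
  set g : ℝ → ℝ := fun T => E T * Real.exp (2 * μ * (T - T₀)) with hgdef
  have hgderiv : ∀ x ≥ T₀, HasDerivAt g
      (deriv E x * Real.exp (2 * μ * (x - T₀)) +
        E x * (Real.exp (2 * μ * (x - T₀)) * (2 * μ))) x := by
    intro x hx
    have h1 : HasDerivAt (fun T : ℝ => 2 * μ * (T - T₀)) (2 * μ) x := by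
      simpa using ((hasDerivAt_id x).sub_const T₀).const_mul (2 * μ)
    exact ((hdiff x hx).hasDerivAt).mul h1.exp
  have hanti : AntitoneOn g (Set.Ici T₀) := by
    apply antitoneOn_of_deriv_nonpos (convex_Ici T₀)
    · intro x hx
      exact ((hgderiv x hx).continuousAt).continuousWithinAt
    · intro x hx
      rw [interior_Ici] at hx
      exact (hgderiv x hx.le).differentiableAt.differentiableWithinAt
    · intro x hx
      rw [interior_Ici] at hx
      rw [(hgderiv x hx.le).deriv]
      have h := hderiv x hx.le
      have hexp : 0 < Real.exp (2 * μ * (x - T₀)) := Real.exp_pos _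
      nlinarith [mul_le_mul_of_nonneg_right h hexp.le]
  -- exponential bound
  have hbound : ∀ T ≥ T₀, E T ≤ E T₀ * Real.exp (-(2 * μ) * (T - T₀)) := by
    intro T hT
    have h1 : g T ≤ g T₀ := hanti Set.self_mem_Ici hT hT
    have h2 : g T₀ = E T₀ := by simp [hgdef]
    rw [h2, hgdef] at h1
    have hexp : 0 < Real.exp (2 * μ * (T - T₀)) := Real.exp_pos _
    rw [neg_mul, Real.exp_neg, mul_comm (E T₀), ← div_eq_inv_mul, le_div_iff₀ hexp]
    exact h1
  -- squeeze
  have hlim : Filter.Tendsto (fun T => E T₀ * Real.exp (-(2 * μ) * (T - T₀)))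
      Filter.atTop (nhds 0) := by
    rw [show (0 : ℝ) = E T₀ * 0 by ring]
    apply Filter.Tendsto.const_mul
    apply Real.tendsto_exp_atBot.comp
    apply Filter.Tendsto.const_mul_atTop_of_neg (by linarith : -(2 * μ) < 0)
    exact Filter.tendsto_atTop_add_const_right _ (-T₀) Filter.tendsto_id
  apply squeeze_zero' (Filter.eventually_atTop.2 ⟨T₀, hnonneg⟩)
    (Filter.eventually_atTop.2 ⟨T₀, hbound⟩) hlim
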